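/- Every sequential reserve matching (induced by any order of precedence over the categories) complies with eligibility requirements, is non-wasteful, and respects priorities. -/

import Mathlib

open Finset

section ReserveSystem

variable {I C : Type*} [Fintype I] [DecidableEq I] [Fintype C] [DecidableEq C]

/-- Patient `i` is eligible for category `c` (i.e. `i π_c ∅`). Priorities are encoded by
injective score functions `pr c : Option I → ℕ`, where `none` stands for `∅` and a
higher score means a higher priority. -/
def Elig (pr : C → Option I → ℕ) (c : C) (i : I) : Prop :=
  pr c none < pr c (some i)

instance (pr : C → Option I → ℕ) (c : C) (i : I) : Decidable (Elig pr c i) := by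
  unfold Elig; infer_instance

/-- A matching assigns each patient a category or `none`, respecting capacities `r`. -/
def IsMatching (r : C → ℕ) (μ : I → Option C) : Prop :=
  ∀ c : C, (univ.filter (fun i => μ i = some c)).card ≤ r c

/-- `μ` complies with eligibility requirements. -/
def CompliesEligibility (pr : C → Option I → ℕ) (μ : I → Option C) : Prop :=
  ∀ i c, μ i = some c → Elig pr c i

/-- `μ` is non-wasteful. -/
def NonWasteful (pr : C → Option I → ℕ) (r : C → ℕ) (μ : I → Option C) : Prop :=
  ∀ i c, Elig pr c i → μ i = none →
    (univ.filter (fun j => μ j = some c)).card = r c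

/-- `μ` respects priorities. -/
def RespectsPriorities (pr : C → Option I → ℕ) (μ : I → Option C) : Prop :=
  ∀ i i' c, μ i = some c → μ i' = none → pr c (some i') < pr c (some i)

/-- Patients selected when category `c` with `k` units is processed on the pool `avail`:
the `k` highest-`π_c`-priority eligible patients (all eligible ones if fewer than `k`). -/
def seqTop (pr : C → Option I → ℕ) (c : C) (k : ℕ) (avail : Finset I) : Finset I :=
  (avail.filter (fun i => Elig pr c i)).filter (fun i =>
    ((avail.filter (fun i' => Elig pr c i')).filter
        (fun j => pr c (some i) < pr c (some j))).card < k)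

/-- The sequential reserve matching induced by processing the given list of categories in
order, over the pool `avail` of patients. -/
def seqMatch (pr : C → Option I → ℕ) (r : C → ℕ) : List C → Finset I → I → Option C
  | [], _, _ => none
  | c :: L, avail, i =>
      if i ∈ seqTop pr c (r c) avail then some c
      else seqMatch pr r L (avail \ seqTop pr c (r c) avail) i

/-- Rank: number of strictly higher-score elements of `E`. -/
def rk (g : I → ℕ) (E : Finset I) (i : I) : ℕ := (E.filter (fun j => g i < g j)).card

lemma rk_lt_card {g : I → ℕ} {E : Finset I} {i : I} (hi : i ∈ E) :
    rk g E i < E.card := by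
  have h : E.filter (fun j => g i < g j) ⊆ E.erase i := by
    intro j hj
    rw [mem_filter] at hj
    rw [mem_erase]
    exact ⟨fun h => by subst h; exact lt_irrefl _ hj.2, hj.1⟩
  calc rk g E i ≤ (E.erase i).card := card_le_card h
    _ < E.card := card_erase_lt_of_mem hi

lemma rk_anti {g : I → ℕ} {E : Finset I} {i i' : I} (hi' : i' ∈ E)
    (h : g i < g i') : rk g E i' < rk g E i := by
  apply card_lt_card
  rw [Finset.ssubset_iff_of_subset]
  · exact ⟨i', mem_filter.2 ⟨hi', h⟩, fun hc => lt_irrefl _ (mem_filter.1 hc).2⟩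
  · intro j hj
    rw [mem_filter] at hj ⊢
    exact ⟨hj.1, h.trans hj.2⟩

lemma rk_injOn {g : I → ℕ} (hg : Function.Injective g) (E : Finset I) :
    Set.InjOn (rk g E) E := by
  intro i hi i' hi' h
  by_contra hne
  rcases lt_or_gt_of_ne (fun he : g i = g i' => hne (hg he)) with hlt | hlt
  · exact absurd h (rk_anti hi' hlt).ne'
  · exact absurd h (rk_anti hi hlt).ne

lemma image_rk {g : I → ℕ} (hg : Function.Injective g) (E : Finset I) :
    E.image (rk g E) = range E.card := by
  apply eq_of_subset_of_card_le
  · intro m hm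
    rw [mem_image] at hm
    obtain ⟨i, hi, rfl⟩ := hm
    exact mem_range.2 (rk_lt_card hi)
  · rw [card_range, card_image_of_injOn (rk_injOn hg E)]

lemma card_rk_filter {g : I → ℕ} (hg : Function.Injective g) (E : Finset I) (k : ℕ) :
    (E.filter (fun i => rk g E i < k)).card = min k E.card := by
  have h3 := card_image_of_injOn
    ((rk_injOn hg E).mono (Finset.coe_subset.mpr (filter_subset (fun i => rk g E i < k) E)))
  rw [← h3]
  have h1 : (E.filter (fun i => rk g E i < k)).image (rk g E)
      = (E.image (rk g E)).filter (fun m => m < k) :=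
    (filter_image (p := fun m => m < k) (f := rk g E) (s := E)).symm
  rw [h1, image_rk hg]
  have h2 : (range E.card).filter (fun m => m < k) = range (min k E.card) := by
    ext m
    simp only [mem_filter, mem_range, lt_min_iff]
    tauto
  rw [h2, card_range]

lemma seqTop_subset (pr : C → Option I → ℕ) (c : C) (k : ℕ) (avail : Finset I) :
    seqTop pr c k avail ⊆ avail := by
  intro i hi
  exact (mem_filter.1 (mem_filter.1 hi).1).1

lemma elig_of_mem_seqTop {pr : C → Option I → ℕ} {c : C} {k : ℕ} {avail : Finset I} {i : I}
    (hi : i ∈ seqTop pr c k avail) : Elig pr c i :=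
  (mem_filter.1 (mem_filter.1 hi).1).2

lemma g_inj {pr : C → Option I → ℕ} (hpr : ∀ c, Function.Injective (pr c)) (c : C) :
    Function.Injective (fun i : I => pr c (some i)) :=
  fun a b h => Option.some.inj (hpr c h)

lemma seqTop_eq (pr : C → Option I → ℕ) (c : C) (k : ℕ) (avail : Finset I) :
    seqTop pr c k avail = (avail.filter (fun i => Elig pr c i)).filter
      (fun i => rk (fun i : I => pr c (some i)) (avail.filter (fun i => Elig pr c i)) i < k) :=
  rfl

lemma card_seqTop {pr : C → Option I → ℕ} (hpr : ∀ c, Function.Injective (pr c))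
    (c : C) (k : ℕ) (avail : Finset I) :
    (seqTop pr c k avail).card = min k (avail.filter (fun i => Elig pr c i)).card := by
  rw [seqTop_eq, card_rk_filter (g_inj hpr c)]

lemma card_seqTop_of_notmem {pr : C → Option I → ℕ} (hpr : ∀ c, Function.Injective (pr c))
    {c : C} {k : ℕ} {avail : Finset I} {i : I} (hi : i ∈ avail) (he : Elig pr c i)
    (hn : i ∉ seqTop pr c k avail) : (seqTop pr c k avail).card = k := by
  have hiE : i ∈ avail.filter (fun i => Elig pr c i) := mem_filter.2 ⟨hi, he⟩
  rw [seqTop_eq] at hn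
  have hk : k ≤ rk (fun i : I => pr c (some i)) (avail.filter (fun i => Elig pr c i)) i := by
    by_contra hc
    exact hn (mem_filter.2 ⟨hiE, not_le.1 hc⟩)
  have : k < (avail.filter (fun i => Elig pr c i)).card :=
    lt_of_le_of_lt hk (rk_lt_card hiE)
  rw [card_seqTop hpr, min_eq_left this.le]

lemma seqTop_priority {pr : C → Option I → ℕ} (hpr : ∀ c, Function.Injective (pr c))
    {c : C} {k : ℕ} {avail : Finset I} {i i' : I} (hi : i ∈ seqTop pr c k avail)
    (hi' : i' ∈ avail) (hn : i' ∉ seqTop pr c k avail) :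
    pr c (some i') < pr c (some i) := by
  set E := avail.filter (fun j => Elig pr c j) with hE
  rw [seqTop_eq] at hi hn
  obtain ⟨hiE, hik⟩ := mem_filter.1 hi
  by_cases he : Elig pr c i'
  · have hi'E : i' ∈ E := mem_filter.2 ⟨hi', he⟩
    have hk : k ≤ rk (fun i : I => pr c (some i)) E i' := by
      by_contra hc
      exact hn (mem_filter.2 ⟨hi'E, not_le.1 hc⟩)
    rcases lt_trichotomy (pr c (some i')) (pr c (some i)) with h | h | h
    · exact h
    · exfalso
      have : i' = i := Option.some.inj (hpr c h)
      subst this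
      exact hn hi
    · exact absurd (lt_of_le_of_lt hk (rk_anti hi'E h)) (by exact absurd hik ∘ fun h2 => not_lt.2 (le_of_lt (lt_of_lt_of_le h2 (le_refl _))))
  · have h1 : pr c (some i') ≠ pr c none := fun h => by simpa using hpr c h
    have h2 : pr c (some i') < pr c none := lt_of_le_of_ne (not_lt.1 he) h1
    exact h2.trans ((mem_filter.1 hiE).2)

lemma seqMatch_mem_of_some (pr : C → Option I → ℕ) (r : C → ℕ)
    {L : List C} {avail : Finset I} {i : I} {c : C}
    (h : seqMatch pr r L avail i = some c) : i ∈ avail := by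
  induction L generalizing avail with
  | nil => simp [seqMatch] at h
  | cons c' L ih =>
    rw [seqMatch] at h
    split_ifs at h with hi
    · exact seqTop_subset pr c' (r c') avail hi
    · exact (mem_sdiff.1 (ih h)).1

lemma seqMatch_elig (pr : C → Option I → ℕ) (r : C → ℕ)
    {L : List C} {avail : Finset I} {i : I} {c : C}
    (h : seqMatch pr r L avail i = some c) : Elig pr c i := by
  induction L generalizing avail with
  | nil => simp [seqMatch] at h
  | cons c' L ih =>
    rw [seqMatch] at h
    split_ifs at h with hi
    · obtain rfl : c' = c := Option.some.inj h
      exact elig_of_mem_seqTop hi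
    · exact ih h

lemma seqMatch_cat_mem (pr : C → Option I → ℕ) (r : C → ℕ)
    {L : List C} {avail : Finset I} {i : I} {c : C}
    (h : seqMatch pr r L avail i = some c) : c ∈ L := by
  induction L generalizing avail with
  | nil => simp [seqMatch] at h
  | cons c' L ih =>
    rw [seqMatch] at h
    split_ifs at h with hi
    · obtain rfl : c' = c := Option.some.inj h
      exact List.mem_cons_self
    · exact List.mem_cons_of_mem _ (ih h)

lemma seqMatch_nonwasteful (pr : C → Option I → ℕ) (hpr : ∀ c, Function.Injective (pr c))
    (r : C → ℕ) {L : List C} (hnd : L.Nodup) {avail : Finset I} {i : I} {c : C}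
    (hc : c ∈ L) (hi : i ∈ avail) (he : Elig pr c i)
    (h : seqMatch pr r L avail i = none) :
    (univ.filter (fun j => seqMatch pr r L avail j = some c)).card = r c := by
  induction L generalizing avail with
  | nil => simp at hc
  | cons c' L ih =>
    rw [seqMatch] at h
    by_cases hitop : i ∈ seqTop pr c' (r c') avail
    · rw [if_pos hitop] at h; exact absurd h (by simp)
    rw [if_neg hitop] at h
    by_cases hcc : c = c'
    · subst hcc
      have hcL : c ∉ L := (List.nodup_cons.1 hnd).1
      have hset : univ.filter (fun j => seqMatch pr r (c :: L) avail j = some c)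
          = seqTop pr c (r c) avail := by
        ext j
        simp only [mem_filter, mem_univ, true_and]
        constructor
        · intro hj
          rw [seqMatch] at hj
          split_ifs at hj with hjt
          · exact hjt
          · exact absurd (seqMatch_cat_mem pr r hj) hcL
        · intro hj
          rw [seqMatch, if_pos hj]
      rw [hset]
      exact card_seqTop_of_notmem hpr hi he hitop
    · have hcL : c ∈ L := by
        rcases List.mem_cons.1 hc with h' | h'
        · exact absurd h' hcc
        · exact h'
      have hi' : i ∈ avail \ seqTop pr c' (r c') avail := mem_sdiff.2 ⟨hi, hitop⟩
      have hset : univ.filter (fun j => seqMatch pr r (c' :: L) avail j = some c)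
          = univ.filter (fun j =>
              seqMatch pr r L (avail \ seqTop pr c' (r c') avail) j = some c) := by
        ext j
        simp only [mem_filter, mem_univ, true_and]
        constructor
        · intro hj
          rw [seqMatch] at hj
          split_ifs at hj with hjt
          · exact absurd (Option.some.inj hj).symm hcc
          · exact hj
        · intro hj
          have hjmem := seqMatch_mem_of_some pr r hj
          rw [seqMatch, if_neg (mem_sdiff.1 hjmem).2]
          exact hj
      rw [hset]
      exact ih (List.nodup_cons.1 hnd).2 hcL hi' h

lemma seqMatch_respects (pr : C → Option I → ℕ) (hpr : ∀ c, Function.Injective (pr c))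
    (r : C → ℕ) {L : List C} {avail : Finset I} {i i' : I} {c : C}
    (h : seqMatch pr r L avail i = some c) (hi' : i' ∈ avail)
    (h' : seqMatch pr r L avail i' = none) :
    pr c (some i') < pr c (some i) := by
  induction L generalizing avail with
  | nil => simp [seqMatch] at h
  | cons c' L ih =>
    rw [seqMatch] at h h'
    by_cases hi'top : i' ∈ seqTop pr c' (r c') avail
    · rw [if_pos hi'top] at h'; exact absurd h' (by simp)
    rw [if_neg hi'top] at h'
    by_cases hitop : i ∈ seqTop pr c' (r c') avail
    · rw [if_pos hitop] at h
      obtain rfl : c' = c := Option.some.inj h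
      exact seqTop_priority hpr hitop hi' hi'top
    · rw [if_neg hitop] at h
      exact ih h (mem_sdiff.2 ⟨hi', hi'top⟩) h'

/-- Every sequential reserve matching complies with eligibility requirements, is
non-wasteful, and respects priorities. -/
theorem sequential_satisfies_axioms
    (pr : C → Option I → ℕ) (hpr : ∀ c, Function.Injective (pr c))
    (r : C → ℕ) (L : List C) (hnd : L.Nodup) (hall : ∀ c : C, c ∈ L) :
    CompliesEligibility pr (seqMatch pr r L univ) ∧
      NonWasteful pr r (seqMatch pr r L univ) ∧
      RespectsPriorities pr (seqMatch pr r L univ) := by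
  refine ⟨fun i c h => seqMatch_elig pr r h, fun i c he h =>
    seqMatch_nonwasteful pr hpr r hnd (hall c) (mem_univ i) he h,
    fun i i' c h h' => seqMatch_respects pr hpr r h (mem_univ i') h'⟩

end ReserveSystem
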